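/- (Root-counting vanishing condition) Let Q(X, Y_1, ..., Y_s) = A_0(X) + A_1(Y_1) + ... + A_s(Y_s) where A_0 is a linearized polynomial of q-degree at most D+k-1 and A_1, ..., A_s are linearized polynomials of q-degree at most D over F_{q^m}. Let f be a linearized polynomial over F_q of q-degree at most k-1 and γ ∈ F_{q^m}. Suppose there are ℓ - r elements x_1, ..., x_{ℓ-r} of F_{q^m} that are linearly independent over F_q such that Q(x_i, f(γ x_i), f(γ^q x_i), ..., f(γ^(q^(s-1)) x_i)) = 0 for all i. If ℓ - r > D + k - 1, then the univariate linearized polynomial Q̂(X) := Q(X, f(γX), f(γ^q X), ..., f(γ^(q^(s-1)) X)) is identically zero. -/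

import Mathlib

open Polynomial Finset

/-- Root-counting vanishing condition: if Q(X,Y₁,...,Y_s) = A₀(X) + Σ_j A_j(Y_j) with
A₀ of q-degree ≤ D+k-1 and each A_j of q-degree ≤ D, f is a linearized polynomial over
F_q of q-degree ≤ k-1, and Q̂(X) := Q(X, f(γX), ..., f(γ^(q^(s-1))X)) vanishes at ℓ-r
F_q-linearly independent points with ℓ-r > D+k-1, then Q̂ is identically zero. -/
theorem root_counting_vanishing (K F : Type*) [Field K] [Field F] [Algebra K F]
    [Fintype K] (q : ℕ) (hq : Fintype.card K = q)
    (D k s ℓ r : ℕ) (A₀ : ℕ → F) (A : Fin s → ℕ → F) (u : Fin k → K) (γ : F)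
    (x : Fin (ℓ - r) → F) (hx : LinearIndependent K x)
    (hvanish : ∀ i : Fin (ℓ - r),
      ((∑ n ∈ Finset.range (D + k), C (A₀ n) * X ^ q ^ n)
        + ∑ j : Fin s,
            (∑ n ∈ Finset.range (D + 1), C (A j n) * X ^ q ^ n).comp
              (∑ c : Fin k,
                C (algebraMap K F (u c) * (γ ^ q ^ (j : ℕ)) ^ q ^ (c : ℕ))
                  * X ^ q ^ (c : ℕ))).eval (x i) = 0)
    (hrad : ℓ - r > D + k - 1) :
    (∑ n ∈ Finset.range (D + k), C (A₀ n) * X ^ q ^ n)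
      + ∑ j : Fin s,
          (∑ n ∈ Finset.range (D + 1), C (A j n) * X ^ q ^ n).comp
            (∑ c : Fin k,
              C (algebraMap K F (u c) * (γ ^ q ^ (j : ℕ)) ^ q ^ (c : ℕ))
                * X ^ q ^ (c : ℕ)) = 0 := by
  set P : F[X] :=
    (∑ n ∈ Finset.range (D + k), C (A₀ n) * X ^ q ^ n)
      + ∑ j : Fin s,
          (∑ n ∈ Finset.range (D + 1), C (A j n) * X ^ q ^ n).comp
            (∑ c : Fin k,
              C (algebraMap K F (u c) * (γ ^ q ^ (j : ℕ)) ^ q ^ (c : ℕ))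
                * X ^ q ^ (c : ℕ)) with hPdef
  classical
  by_contra hP0
  -- characteristic setup
  obtain ⟨p, hcp⟩ := CharP.exists K
  haveI := hcp
  have hp : p.Prime := (CharP.char_is_prime K p)
  haveI := Fact.mk hp
  obtain ⟨e, -, hcard⟩ := FiniteField.card K p
  haveI : CharP F p := charP_of_injective_algebraMap (algebraMap K F).injective p
  have hq2 : 1 < q := hq ▸ Fintype.one_lt_card
  have hq1 : 1 ≤ q := le_of_lt hq2
  -- Frobenius facts
  have hfa : ∀ (a b : F) (n : ℕ), (a + b) ^ q ^ n = a ^ q ^ n + b ^ q ^ n := by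
    intro a b n
    rw [← hq, hcard, ← pow_mul]
    exact add_pow_char_pow a b p _
  have hfc : ∀ (c : K) (n : ℕ), (algebraMap K F c) ^ q ^ n = algebraMap K F c := by
    intro c n
    rw [← map_pow, ← hq, FiniteField.pow_card_pow]
  -- linearity predicate
  set L : F[X] → Prop := fun Q =>
    (∀ a b : F, Q.eval (a + b) = Q.eval a + Q.eval b) ∧
    (∀ (c : K) (a : F), Q.eval (algebraMap K F c * a) = algebraMap K F c * Q.eval a)
    with hL
  have hmono : ∀ (d : F) (n : ℕ), L (C d * X ^ q ^ n) := by
    intro d n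
    constructor
    · intro a b; simp [hfa a b n, mul_add]
    · intro c a; simp [mul_pow, hfc c n]; ring
  have haddL : ∀ Q R : F[X], L Q → L R → L (Q + R) := by
    intro Q R hQ hR
    constructor
    · intro a b; simp [hQ.1 a b, hR.1 a b]; ring
    · intro c a; simp [hQ.2 c a, hR.2 c a]; ring
  have hzeroL : L 0 := by constructor <;> intros <;> simp
  have hcompL : ∀ Q R : F[X], L Q → L R → L (Q.comp R) := by
    intro Q R hQ hR
    constructor
    · intro a b; simp only [eval_comp, hR.1 a b, hQ.1]
    · intro c a; simp only [eval_comp, hR.2 c a, hQ.2]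
  have hPlin : L P := by
    rw [hPdef]
    apply haddL
    · exact Finset.sum_induction _ _ haddL hzeroL (fun n _ => hmono _ _)
    · apply Finset.sum_induction _ _ haddL hzeroL
      intro j _
      apply hcompL
      · exact Finset.sum_induction _ _ haddL hzeroL (fun n _ => hmono _ _)
      · exact Finset.sum_induction _ _ haddL hzeroL (fun c _ => hmono _ _)
  -- P vanishes on the span of the x i
  have h0 : P.eval 0 = 0 := by
    have h := hPlin.1 0 0
    rw [add_zero] at h
    exact (left_eq_add.mp h)
  have hvspan : ∀ y ∈ Submodule.span K (Set.range x), P.eval y = 0 := by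
    intro y hy
    refine Submodule.span_induction ?_ ?_ ?_ ?_ hy
    · rintro z ⟨i, rfl⟩; exact hvanish i
    · exact h0
    · intro a b _ _ ha hb; rw [hPlin.1 a b, ha, hb, add_zero]
    · intro c a _ ha
      rw [Algebra.smul_def, hPlin.2 c a, ha, mul_zero]
  -- cardinality of the span
  let b := Module.Basis.span hx
  haveI : Fintype ↥(Submodule.span K (Set.range x)) := Module.fintypeOfFintype b
  have hcardspan : Fintype.card ↥(Submodule.span K (Set.range x)) = q ^ (ℓ - r) := by
    rw [Module.card_fintype b, hq, Fintype.card_fin]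
  -- injection into roots
  have hinj : Fintype.card ↥(Submodule.span K (Set.range x)) ≤ P.roots.toFinset.card := by
    rw [← Fintype.card_coe P.roots.toFinset]
    refine Fintype.card_le_of_injective
      (fun y => ⟨y.1, by
        rw [Multiset.mem_toFinset, mem_roots hP0]
        exact hvspan y.1 y.2⟩) ?_
    intro y z h
    exact Subtype.ext (Subtype.mk_eq_mk.mp h)
  have hroots : P.roots.toFinset.card ≤ P.natDegree :=
    le_trans (Multiset.toFinset_card_le _) (Polynomial.card_roots' P)
  -- degree bound
  have hsum1 : ∀ (m : ℕ) (a : ℕ → F),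
      (∑ n ∈ Finset.range m, C (a n) * X ^ q ^ n).natDegree ≤ q ^ (m - 1) := by
    intro m a
    refine Polynomial.natDegree_sum_le_of_forall_le _ _ ?_
    intro n hn
    refine le_trans (natDegree_C_mul_le _ _) ?_
    rw [natDegree_X_pow]
    exact Nat.pow_le_pow_right hq1 (Nat.le_sub_one_of_lt (Finset.mem_range.mp hn))
  have hdeg : P.natDegree ≤ q ^ (D + k - 1) := by
    rw [hPdef]
    refine le_trans (natDegree_add_le _ _) (max_le ?_ ?_)
    · exact hsum1 (D + k) A₀
    · refine Polynomial.natDegree_sum_le_of_forall_le _ _ ?_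
      intro j _
      rcases Nat.eq_zero_or_pos k with hk | hk
      · subst hk
        rw [show (∑ c : Fin 0,
            C (algebraMap K F (u c) * (γ ^ q ^ (j : ℕ)) ^ q ^ (c : ℕ))
              * X ^ q ^ (c : ℕ)) = (0 : F[X]) from by simp, comp_zero]
        simp
      · refine le_trans (natDegree_comp_le) ?_
        have h1 : (∑ n ∈ Finset.range (D + 1), C (A j n) * X ^ q ^ n).natDegree ≤ q ^ D := by
          simpa using hsum1 (D + 1) (A j)
        have h2 : (∑ c : Fin k,
            C (algebraMap K F (u c) * (γ ^ q ^ (j : ℕ)) ^ q ^ (c : ℕ))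
              * X ^ q ^ (c : ℕ)).natDegree ≤ q ^ (k - 1) := by
          refine Polynomial.natDegree_sum_le_of_forall_le _ _ ?_
          intro c _
          refine le_trans (natDegree_C_mul_le _ _) ?_
          rw [natDegree_X_pow]
          exact Nat.pow_le_pow_right hq1 (Nat.le_sub_one_of_lt c.2)
        calc (∑ n ∈ Finset.range (D + 1), C (A j n) * X ^ q ^ n).natDegree *
              (∑ c : Fin k,
                C (algebraMap K F (u c) * (γ ^ q ^ (j : ℕ)) ^ q ^ (c : ℕ))
                  * X ^ q ^ (c : ℕ)).natDegree
            ≤ q ^ D * q ^ (k - 1) := Nat.mul_le_mul h1 h2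
          _ = q ^ (D + k - 1) := by rw [← pow_add]; congr 1; omega
  -- contradiction
  have hlt : q ^ (D + k - 1) < q ^ (ℓ - r) := Nat.pow_lt_pow_right hq2 hrad
  omega
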